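/- arXiv:2005.05458 — 3 statements merged into one kernel-verified Lean document; each statement's English description precedes it below -/
import Mathlib

section
/- For every σ > 0 and h ≥ 0, the Rician density integrated against the Rayleigh distribution of the cluster-center distance satisfies ∫_0^∞ (v/σ²) e^{−v²/(2σ²)} · (h/σ²) e^{−(v²+h²)/(2σ²)} I_0(hv/σ²) dv = (h/(2σ²)) e^{−h²/(4σ²)}, i.e., mixing Rice(h; v, σ) over V ~ Rayleigh(σ) yields Rayleigh(√2 σ). -/
open MeasureTheory Real

/-- Modified Bessel function of the first kind of order zero,
`I₀(z) = (1/π) ∫_0^π exp (z cos θ) dθ`. -/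
noncomputable def besselI0 (z : ℝ) : ℝ :=
  (1 / π) * ∫ θ in (0 : ℝ)..π, Real.exp (z * Real.cos θ)


lemma aux_gauss_lin (b c : ℝ) (hb : 0 < b) :
    ∫ x : ℝ, Real.exp (-b * x ^ 2 + c * x)
      = Real.sqrt (π / b) * Real.exp (c ^ 2 / (4 * b)) := by
  have hpt : ∀ x : ℝ, Real.exp (-b * x ^ 2 + c * x)
      = Real.exp (-b * (x - c / (2 * b)) ^ 2) * Real.exp (c ^ 2 / (4 * b)) := by
    intro x
    rw [← Real.exp_add]
    congr 1
    field_simp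
    ring
  simp_rw [hpt]
  rw [integral_mul_const]
  have : ∫ x : ℝ, Real.exp (-b * (x - c / (2 * b)) ^ 2)
      = ∫ x : ℝ, Real.exp (-b * x ^ 2) := by
    simp_rw [sub_eq_add_neg]
    exact integral_add_right_eq_self (fun x : ℝ => Real.exp (-b * x ^ 2)) (-(c / (2 * b)))
  rw [this, integral_gaussian]

lemma aux_integrable_lin (b c : ℝ) (hb : 0 < b) :
    Integrable (fun v : ℝ => v * Real.exp (-b * v ^ 2 + c * v)) := by
  set d : ℝ := c / (2 * b) with hd
  have hint : Integrable (fun w : ℝ =>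
      Real.exp (c ^ 2 / (4 * b)) * ((w + d) * Real.exp (-b * w ^ 2))) := by
    apply Integrable.const_mul
    have h1 : Integrable (fun w : ℝ => w * Real.exp (-b * w ^ 2)) :=
      integrable_mul_exp_neg_mul_sq hb
    have h2 : Integrable (fun w : ℝ => d * Real.exp (-b * w ^ 2)) :=
      (integrable_exp_neg_mul_sq hb).const_mul d
    have := h1.add h2
    exact this.congr (Filter.Eventually.of_forall fun w => by simp only [Pi.add_apply]; ring)
  have := hint.comp_sub_right d
  convert this using 1
  funext v
  show v * Real.exp (-b * v ^ 2 + c * v)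
      = Real.exp (c ^ 2 / (4 * b)) * ((v - d + d) * Real.exp (-b * (v - d) ^ 2))
  rw [sub_add_cancel, mul_comm (Real.exp _), mul_assoc, ← Real.exp_add]
  congr 2
  rw [hd]
  field_simp
  ring

lemma aux_plane (b c : ℝ) (hb : 0 < b) :
    ∫ p : ℝ × ℝ, Real.exp (-b * (p.1 ^ 2 + p.2 ^ 2) + c * p.1)
      = π / b * Real.exp (c ^ 2 / (4 * b)) := by
  have hpt : ∀ p : ℝ × ℝ, Real.exp (-b * (p.1 ^ 2 + p.2 ^ 2) + c * p.1)
      = Real.exp (-b * p.1 ^ 2 + c * p.1) * Real.exp (-b * p.2 ^ 2) := by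
    intro p
    rw [← Real.exp_add]
    congr 1
    ring
  rw [Measure.volume_eq_prod]
  simp_rw [hpt]
  rw [integral_prod_mul (fun x : ℝ => Real.exp (-b * x ^ 2 + c * x)) (fun y : ℝ => Real.exp (-b * y ^ 2)), aux_gauss_lin b c hb, integral_gaussian]
  have h : Real.sqrt (π / b) * Real.sqrt (π / b) = π / b :=
    Real.mul_self_sqrt (by positivity)
  calc Real.sqrt (π / b) * Real.exp (c ^ 2 / (4 * b)) * Real.sqrt (π / b)
      = Real.sqrt (π / b) * Real.sqrt (π / b) * Real.exp (c ^ 2 / (4 * b)) := by ring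
    _ = π / b * Real.exp (c ^ 2 / (4 * b)) := by rw [h]

lemma aux_angle (z : ℝ) :
    ∫ θ in Set.Ioo (-π) π, Real.exp (z * Real.cos θ) = 2 * π * besselI0 z := by
  have hπ : (0:ℝ) < π := Real.pi_pos
  have hcont : ∀ a b : ℝ, IntervalIntegrable (fun θ => Real.exp (z * Real.cos θ)) volume a b :=
    fun a b => (Real.continuous_exp.comp (continuous_const.mul Real.continuous_cos)).intervalIntegrable a b
  have h1 : ∫ θ in Set.Ioo (-π) π, Real.exp (z * Real.cos θ)
      = ∫ θ in (-π)..π, Real.exp (z * Real.cos θ) := by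
    rw [intervalIntegral.integral_of_le (by linarith), integral_Ioc_eq_integral_Ioo]
  have h2 : ∫ θ in (-π)..(0:ℝ), Real.exp (z * Real.cos θ)
      = ∫ θ in (0:ℝ)..π, Real.exp (z * Real.cos θ) := by
    have := intervalIntegral.integral_comp_neg (a := (0:ℝ)) (b := π)
      (fun θ => Real.exp (z * Real.cos θ))
    simp only [Real.cos_neg, neg_zero] at this
    rw [← this]
  have h3 : ∫ θ in (-π)..π, Real.exp (z * Real.cos θ)
      = (∫ θ in (-π)..(0:ℝ), Real.exp (z * Real.cos θ))
        + ∫ θ in (0:ℝ)..π, Real.exp (z * Real.cos θ) :=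
    (intervalIntegral.integral_add_adjacent_intervals (hcont _ _) (hcont _ _)).symm
  rw [h1, h3, h2, besselI0]
  field_simp
  ring

lemma aux_key (b c : ℝ) (hb : 0 < b) (hc : 0 ≤ c) :
    ∫ v in Set.Ioi (0 : ℝ), v * Real.exp (-b * v ^ 2) * besselI0 (c * v)
      = 1 / (2 * b) * Real.exp (c ^ 2 / (4 * b)) := by
  have hπ : (0:ℝ) < π := Real.pi_pos
  have polar := integral_comp_polarCoord_symm
    (fun x : ℝ × ℝ => Real.exp (-b * (x.1 ^ 2 + x.2 ^ 2) + c * x.1))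
  have hfp : ∀ p : ℝ × ℝ, p.1 •
        Real.exp (-b * ((polarCoord.symm p).1 ^ 2 + (polarCoord.symm p).2 ^ 2)
          + c * (polarCoord.symm p).1)
      = p.1 * Real.exp (-b * p.1 ^ 2 + c * p.1 * Real.cos p.2) := by
    intro p
    rw [polarCoord_symm_apply, smul_eq_mul]
    congr 2
    simp only
    linear_combination (-(b * p.1 ^ 2)) * Real.sin_sq_add_cos_sq p.2
  rw [polarCoord_target] at polar
  simp_rw [hfp, aux_plane b c hb] at polar
  -- integrability on the product set
  set g : ℝ × ℝ → ℝ := fun p => p.1 * Real.exp (-b * p.1 ^ 2 + c * p.1 * Real.cos p.2) with hg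
  have hmeas : MeasurableSet (Set.Ioi (0:ℝ) ×ˢ Set.Ioo (-π) π) :=
    measurableSet_Ioi.prod measurableSet_Ioo
  have hGint : IntegrableOn (fun p : ℝ × ℝ => p.1 * Real.exp (-b * p.1 ^ 2 + c * p.1))
      (Set.Ioi (0:ℝ) ×ˢ Set.Ioo (-π) π) := by
    rw [IntegrableOn, Measure.volume_eq_prod, ← Measure.prod_restrict]
    have h1 : Integrable (fun v : ℝ => v * Real.exp (-b * v ^ 2 + c * v))
        (volume.restrict (Set.Ioi (0:ℝ))) := (aux_integrable_lin b c hb).restrict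
    have h2 : Integrable (fun _ : ℝ => (1:ℝ)) (volume.restrict (Set.Ioo (-π) π)) :=
      integrable_const 1
    have := h1.mul_prod h2
    simpa using this
  have hgint : IntegrableOn g (Set.Ioi (0:ℝ) ×ˢ Set.Ioo (-π) π) := by
    apply hGint.mono' ((by fun_prop : Continuous g).aestronglyMeasurable.restrict)
    rw [ae_restrict_iff' hmeas]
    filter_upwards with p hp
    obtain ⟨hp1, _⟩ := hp
    have hp1' : (0:ℝ) < p.1 := hp1
    have hcos : Real.cos p.2 ≤ 1 := Real.cos_le_one p.2
    have hle : c * p.1 * Real.cos p.2 ≤ c * p.1 := by nlinarith [mul_nonneg (mul_nonneg hc hp1'.le) (sub_nonneg.2 hcos)]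
    have hmono : Real.exp (-b * p.1 ^ 2 + c * p.1 * Real.cos p.2)
        ≤ Real.exp (-b * p.1 ^ 2 + c * p.1) := Real.exp_le_exp.2 (by linarith)
    rw [hg, Real.norm_eq_abs]
    simp only
    rw [abs_mul, abs_of_pos hp1', abs_of_pos (Real.exp_pos _)]
    exact mul_le_mul_of_nonneg_left hmono hp1'.le
  -- Fubini
  have fub : ∫ p in Set.Ioi (0:ℝ) ×ˢ Set.Ioo (-π) π, g p
      = ∫ v in Set.Ioi (0:ℝ), ∫ θ in Set.Ioo (-π) π, g (v, θ) := by
    rw [Measure.volume_eq_prod]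
    apply setIntegral_prod
    rwa [IntegrableOn, Measure.volume_eq_prod] at hgint
  have inner : ∀ v : ℝ, (∫ θ in Set.Ioo (-π) π, g (v, θ))
      = 2 * π * (v * Real.exp (-b * v ^ 2) * besselI0 (c * v)) := by
    intro v
    have hpt : ∀ θ : ℝ, g (v, θ)
        = (v * Real.exp (-b * v ^ 2)) * Real.exp ((c * v) * Real.cos θ) := by
      intro θ
      rw [hg]
      simp only
      conv_rhs => rw [mul_assoc, ← Real.exp_add]
    simp_rw [hpt]
    rw [integral_const_mul, aux_angle (c * v)]
    ring
  simp_rw [inner] at fub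
  rw [integral_const_mul] at fub
  have main : 2 * π * ∫ v in Set.Ioi (0:ℝ), v * Real.exp (-b * v ^ 2) * besselI0 (c * v)
      = π / b * Real.exp (c ^ 2 / (4 * b)) := by
    rw [← fub, ← polar]
  have h2π : (2 * π) ≠ 0 := by positivity
  have heq : ∫ v in Set.Ioi (0:ℝ), v * Real.exp (-b * v ^ 2) * besselI0 (c * v)
      = (π / b * Real.exp (c ^ 2 / (4 * b))) / (2 * π) := by
    rw [eq_div_iff h2π]
    linarith [main]
  rw [heq]
  field_simp

/-- Mixing the Rician density `Rice(h; v, σ)` over a Rayleigh(σ)-distributed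
center distance `V` yields the Rayleigh(√2 σ) density:
`∫_0^∞ (v/σ²) e^{−v²/(2σ²)} (h/σ²) e^{−(v²+h²)/(2σ²)} I₀(hv/σ²) dv
  = (h/(2σ²)) e^{−h²/(4σ²)}`. -/
theorem rician_rayleigh_mixing
    (σ : ℝ) (hσ : 0 < σ) (h : ℝ) (hh : 0 ≤ h) :
    ∫ v in Set.Ioi (0 : ℝ),
        (v / σ ^ 2 * Real.exp (-v ^ 2 / (2 * σ ^ 2))) *
          (h / σ ^ 2 * Real.exp (-(v ^ 2 + h ^ 2) / (2 * σ ^ 2))) *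
            besselI0 (h * v / σ ^ 2) =
      h / (2 * σ ^ 2) * Real.exp (-h ^ 2 / (4 * σ ^ 2)) := by
  have hσ2 : (0:ℝ) < σ ^ 2 := by positivity
  have hb : (0:ℝ) < 1 / σ ^ 2 := by positivity
  have hc : (0:ℝ) ≤ h / σ ^ 2 := by positivity
  have hkey := aux_key (1 / σ ^ 2) (h / σ ^ 2) hb hc
  have hpt : ∀ v : ℝ,
      (v / σ ^ 2 * Real.exp (-v ^ 2 / (2 * σ ^ 2))) *
          (h / σ ^ 2 * Real.exp (-(v ^ 2 + h ^ 2) / (2 * σ ^ 2))) *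
            besselI0 (h * v / σ ^ 2)
        = (h / σ ^ 4 * Real.exp (-h ^ 2 / (2 * σ ^ 2))) *
            (v * Real.exp (-(1 / σ ^ 2) * v ^ 2) * besselI0 ((h / σ ^ 2) * v)) := by
    intro v
    have harg : h * v / σ ^ 2 = (h / σ ^ 2) * v := by ring
    have hexp : Real.exp (-v ^ 2 / (2 * σ ^ 2)) * Real.exp (-(v ^ 2 + h ^ 2) / (2 * σ ^ 2))
        = Real.exp (-h ^ 2 / (2 * σ ^ 2)) * Real.exp (-(1 / σ ^ 2) * v ^ 2) := by
      rw [← Real.exp_add, ← Real.exp_add]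
      congr 1
      field_simp
      ring
    rw [harg]
    calc (v / σ ^ 2 * Real.exp (-v ^ 2 / (2 * σ ^ 2))) *
          (h / σ ^ 2 * Real.exp (-(v ^ 2 + h ^ 2) / (2 * σ ^ 2))) *
            besselI0 ((h / σ ^ 2) * v)
        = (v * h / σ ^ 4) * (Real.exp (-v ^ 2 / (2 * σ ^ 2)) *
            Real.exp (-(v ^ 2 + h ^ 2) / (2 * σ ^ 2))) * besselI0 ((h / σ ^ 2) * v) := by
          ring
      _ = (v * h / σ ^ 4) * (Real.exp (-h ^ 2 / (2 * σ ^ 2)) *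
            Real.exp (-(1 / σ ^ 2) * v ^ 2)) * besselI0 ((h / σ ^ 2) * v) := by rw [hexp]
      _ = (h / σ ^ 4 * Real.exp (-h ^ 2 / (2 * σ ^ 2))) *
            (v * Real.exp (-(1 / σ ^ 2) * v ^ 2) * besselI0 ((h / σ ^ 2) * v)) := by ring
  simp_rw [hpt]
  rw [integral_const_mul, hkey]
  rw [show 1 / (2 * (1 / σ ^ 2)) = σ ^ 2 / 2 by field_simp]
  rw [← mul_assoc, mul_comm (h / σ ^ 4 * Real.exp (-h ^ 2 / (2 * σ ^ 2))) (σ ^ 2 / 2)]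
  rw [mul_assoc (σ ^ 2 / 2), mul_assoc, ← Real.exp_add]
  have hE : -h ^ 2 / (2 * σ ^ 2) + (h / σ ^ 2) ^ 2 / (4 * (1 / σ ^ 2)) = -h ^ 2 / (4 * σ ^ 2) := by
    field_simp
    ring
  rw [hE]
  rw [show σ ^ 2 / 2 * (h / σ ^ 4 * Real.exp (-h ^ 2 / (4 * σ ^ 2)))
      = (σ ^ 2 / 2 * (h / σ ^ 4)) * Real.exp (-h ^ 2 / (4 * σ ^ 2)) from by ring]
  congr 1
  field_simp
end

section
/- For α > 2 and t > 0, the integral ∫_0^∞ (1 − 1/(1 + t·u^{−α})) u du equals (t^{2/α}/2) · Γ(1 + 2/α) · Γ(1 − 2/α). Equivalently, ∫_0^∞ t/(u^α + t) · u du = (t^{2/α}/2) Γ(1+2/α) Γ(1−2/α). -/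
open MeasureTheory Real

open Set

lemma mellin_one_add_inv {s : ℝ} (hs0 : 0 < s) (hs1 : s < 1) :
    ∫ x in Ioi (0:ℝ), x ^ (s - 1) / (1 + x) = Real.Gamma s * Real.Gamma (1 - s) := by
  set f : ℝ → ℝ → ℝ := fun x y => x ^ (s - 1) * Real.exp (-((1 + x) * y)) with hf
  -- measurability of the uncurried function
  have hmeas : Measurable (fun p : ℝ × ℝ => ENNReal.ofReal (f p.1 p.2)) := by
    rw [hf]; fun_prop
  -- inner integral in y
  have h_inner_y : ∀ x ∈ Ioi (0:ℝ), ∫ y in Ioi (0:ℝ), f x y = x ^ (s - 1) / (1 + x) := by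
    intro x hx
    have hx1 : (0:ℝ) < 1 + x := by linarith [mem_Ioi.mp hx]
    rw [MeasureTheory.integral_const_mul]
    have : ∫ y in Ioi (0:ℝ), Real.exp (-((1 + x) * y))
        = ∫ y in Ioi (0:ℝ), y ^ ((1:ℝ) - 1) * Real.exp (-((1 + x) * y)) := by
      refine setIntegral_congr_fun measurableSet_Ioi (fun y hy => ?_)
      rw [sub_self, Real.rpow_zero, one_mul]
    rw [this, integral_rpow_mul_exp_neg_mul_Ioi one_pos hx1, Real.rpow_one, Real.Gamma_one]
    ring
  -- inner integral in x
  have h_inner_x : ∀ y ∈ Ioi (0:ℝ), ∫ x in Ioi (0:ℝ), f x y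
      = Real.Gamma s * (Real.exp (-y) * y ^ (-s)) := by
    intro y hy
    have hy0 : (0:ℝ) < y := mem_Ioi.mp hy
    have : ∫ x in Ioi (0:ℝ), f x y
        = ∫ x in Ioi (0:ℝ), Real.exp (-y) * (x ^ (s - 1) * Real.exp (-(y * x))) := by
      refine setIntegral_congr_fun measurableSet_Ioi (fun x hx => ?_)
      rw [hf]; dsimp only
      rw [show -((1 + x) * y) = -y + -(y * x) by ring, Real.exp_add]; ring
    rw [this, MeasureTheory.integral_const_mul, integral_rpow_mul_exp_neg_mul_Ioi hs0 hy0,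
      one_div, Real.inv_rpow hy0.le, ← Real.rpow_neg hy0.le]
    ring
  -- integrability in y for fixed x
  have int_y : ∀ x ∈ Ioi (0:ℝ), IntegrableOn (fun y => f x y) (Ioi (0:ℝ)) := by
    intro x hx
    have hx1 : (0:ℝ) < 1 + x := by linarith [mem_Ioi.mp hx]
    have h2 := (exp_neg_integrableOn_Ioi 0 hx1).const_mul (x ^ (s - 1))
    refine IntegrableOn.congr_fun h2 (fun y hy => ?_) measurableSet_Ioi
    rw [hf]; dsimp only; rw [neg_mul]
  -- integrability in x for fixed y
  have int_x : ∀ y ∈ Ioi (0:ℝ), IntegrableOn (fun x => f x y) (Ioi (0:ℝ)) := by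
    intro y hy
    have hy0 : (0:ℝ) < y := mem_Ioi.mp hy
    have h1 : IntegrableOn (fun x : ℝ => x ^ (s - 1) * Real.exp (-y * x ^ (1:ℝ)))
        (Ioi (0:ℝ)) := integrableOn_rpow_mul_exp_neg_mul_rpow (by linarith) zero_lt_one hy0
    have h2 := (h1.const_mul (Real.exp (-y)))
    refine IntegrableOn.congr_fun h2 (fun x hx => ?_) measurableSet_Ioi
    rw [hf]; dsimp only
    rw [Real.rpow_one, show -((1 + x) * y) = -y + (-y * x) by ring, Real.exp_add]; ring
  -- nonnegativity on the relevant sets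
  have hnonneg : ∀ x ∈ Ioi (0:ℝ), ∀ y : ℝ, 0 ≤ f x y := by
    intro x hx y
    exact mul_nonneg (Real.rpow_nonneg (le_of_lt (mem_Ioi.mp hx)) _) (Real.exp_nonneg _)
  -- the key lintegral computation
  have key : ∫⁻ x in Ioi (0:ℝ), ENNReal.ofReal (x ^ (s - 1) / (1 + x))
      = ENNReal.ofReal (Real.Gamma s * Real.Gamma (1 - s)) := by
    have swap : ∫⁻ x in Ioi (0:ℝ), ∫⁻ y in Ioi (0:ℝ), ENNReal.ofReal (f x y)
        = ∫⁻ y in Ioi (0:ℝ), ∫⁻ x in Ioi (0:ℝ), ENNReal.ofReal (f x y) :=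
      lintegral_lintegral_swap (hmeas.aemeasurable)
    calc ∫⁻ x in Ioi (0:ℝ), ENNReal.ofReal (x ^ (s - 1) / (1 + x))
        = ∫⁻ x in Ioi (0:ℝ), ∫⁻ y in Ioi (0:ℝ), ENNReal.ofReal (f x y) := by
          refine setLIntegral_congr_fun measurableSet_Ioi
            (fun x hx => ?_)
          rw [← h_inner_y x hx,
            ofReal_integral_eq_lintegral_ofReal (int_y x hx)
              (Filter.Eventually.of_forall (fun y => hnonneg x hx y))]
      _ = ∫⁻ y in Ioi (0:ℝ), ∫⁻ x in Ioi (0:ℝ), ENNReal.ofReal (f x y) := swap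
      _ = ∫⁻ y in Ioi (0:ℝ), ENNReal.ofReal (Real.Gamma s * (Real.exp (-y) * y ^ (-s))) := by
          refine setLIntegral_congr_fun measurableSet_Ioi
            (fun y hy => ?_)
          rw [← h_inner_x y hy,
            ← ofReal_integral_eq_lintegral_ofReal (int_x y hy)
              (ae_restrict_of_forall_mem measurableSet_Ioi (fun x hx => hnonneg x hx y))]
      _ = ENNReal.ofReal (Real.Gamma s * Real.Gamma (1 - s)) := by
          have hint : IntegrableOn (fun y : ℝ => Real.exp (-y) * y ^ (-s)) (Ioi (0:ℝ)) := by
            have := Real.GammaIntegral_convergent (s := 1 - s) (by linarith)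
            refine this.congr_fun (fun y hy => ?_) measurableSet_Ioi
            rw [show (1:ℝ) - s - 1 = -s by ring]
          rw [← ofReal_integral_eq_lintegral_ofReal (hint.const_mul _)
            (ae_restrict_of_forall_mem measurableSet_Ioi (fun y hy => by
              have : (0:ℝ) < y := mem_Ioi.mp hy
              positivity))]
          congr 1
          rw [MeasureTheory.integral_const_mul]
          congr 1
          rw [Real.Gamma_eq_integral (by linarith : (0:ℝ) < 1 - s)]
          refine setIntegral_congr_fun measurableSet_Ioi (fun y hy => ?_)
          rw [show (1:ℝ) - s - 1 = -s by ring]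
  -- conclude
  have hmeas2 : AEStronglyMeasurable (fun x : ℝ => x ^ (s - 1) / (1 + x))
      (volume.restrict (Ioi (0:ℝ))) := by
    apply Measurable.aestronglyMeasurable
    fun_prop
  rw [integral_eq_lintegral_of_nonneg_ae
    (ae_restrict_of_forall_mem measurableSet_Ioi (fun x hx => by
      have hx0 : (0:ℝ) < x := mem_Ioi.mp hx
      positivity)) hmeas2, key, ENNReal.toReal_ofReal]
  exact mul_nonneg (Real.Gamma_pos_of_pos hs0).le (Real.Gamma_pos_of_pos (by linarith)).le

/-- The key radial interference integral: for `α > 2` and `t > 0`,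
`∫_0^∞ (1 − 1/(1 + t u^{−α})) u du = (t^{2/α}/2) Γ(1+2/α) Γ(1−2/α)`, and
equivalently `∫_0^∞ (t/(u^α + t)) u du = (t^{2/α}/2) Γ(1+2/α) Γ(1−2/α)`. -/
theorem radial_interference_integral
    (α t : ℝ) (hα : 2 < α) (ht : 0 < t) :
    (∫ u in Set.Ioi (0 : ℝ), (1 - 1 / (1 + t * u ^ (-α))) * u) =
      t ^ (2 / α) / 2 * Real.Gamma (1 + 2 / α) * Real.Gamma (1 - 2 / α) ∧
    (∫ u in Set.Ioi (0 : ℝ), t / (u ^ α + t) * u) =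
      t ^ (2 / α) / 2 * Real.Gamma (1 + 2 / α) * Real.Gamma (1 - 2 / α) := by
  have hα0 : (0:ℝ) < α := by linarith
  set s : ℝ := 2 / α with hs
  have hs0 : 0 < s := by positivity
  have hs1 : s < 1 := by rw [hs, div_lt_one hα0]; linarith
  have hαs : α * (s - 1) = 2 - α := by rw [hs]; field_simp
  have key2 : (∫ u in Ioi (0 : ℝ), t / (u ^ α + t) * u)
      = t ^ s / 2 * Real.Gamma (1 + s) * Real.Gamma (1 - s) := by
    have e1 : (∫ u in Ioi (0 : ℝ), t / (u ^ α + t) * u)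
        = ∫ y in Ioi (0:ℝ), α⁻¹ * t * (y ^ (s - 1) / (y + t)) := by
      rw [← integral_comp_rpow_Ioi_of_pos (g := fun y => α⁻¹ * t * (y ^ (s - 1) / (y + t))) hα0]
      refine setIntegral_congr_fun measurableSet_Ioi (fun x hx => ?_)
      have hx0 : (0:ℝ) < x := mem_Ioi.mp hx
      have hxα : (0:ℝ) < x ^ α := Real.rpow_pos_of_pos hx0 α
      have h1 : (x ^ α) ^ (s - 1) = x ^ (2 - α) := by
        rw [← Real.rpow_mul hx0.le, hαs]
      have h2 : x ^ (α - 1) * x ^ (2 - α) = x := by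
        rw [← Real.rpow_add hx0, show α - 1 + (2 - α) = 1 by ring, Real.rpow_one]
      rw [smul_eq_mul, h1,
        show α * x ^ (α - 1) * (α⁻¹ * t * (x ^ (2 - α) / (x ^ α + t)))
          = (α * α⁻¹) * (t * (x ^ (α - 1) * x ^ (2 - α)) / (x ^ α + t)) by ring,
        mul_inv_cancel₀ hα0.ne', h2, one_mul]
      ring
    have e2 : (∫ y in Ioi (0:ℝ), y ^ (s - 1) / (y + t))
        = t ^ (s - 1) * (Real.Gamma s * Real.Gamma (1 - s)) := by
      have := integral_comp_mul_left_Ioi (g := fun y => y ^ (s - 1) / (y + t)) 0 ht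
      rw [mul_zero] at this
      have e3 : (∫ x in Ioi (0:ℝ), (fun y => y ^ (s - 1) / (y + t)) (t * x))
          = ∫ x in Ioi (0:ℝ), t ^ (s - 2) * (x ^ (s - 1) / (1 + x)) := by
        refine setIntegral_congr_fun measurableSet_Ioi (fun x hx => ?_)
        have hx0 : (0:ℝ) < x := mem_Ioi.mp hx
        dsimp only
        rw [Real.mul_rpow ht.le hx0.le,
          show t * x + t = t * (1 + x) by ring,
          show t ^ (s - 2) = t ^ (s - 1) * t⁻¹ by
            rw [← Real.rpow_neg_one t, ← Real.rpow_add ht]; congr 1; ring]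
        have h1x : (0:ℝ) < 1 + x := by linarith
        field_simp
      rw [e3, MeasureTheory.integral_const_mul, mellin_one_add_inv hs0 hs1] at this
      have e4 : (∫ y in Ioi (0:ℝ), y ^ (s - 1) / (y + t))
          = t * (t ^ (s - 2) * (Real.Gamma s * Real.Gamma (1 - s))) := by
        rw [this, smul_eq_mul, ← mul_assoc, mul_inv_cancel₀ ht.ne', one_mul]
      rw [e4, ← mul_assoc]
      congr 1
      rw [show t * t ^ (s - 2) = t ^ (1:ℝ) * t ^ (s - 2) by rw [Real.rpow_one],
        ← Real.rpow_add ht]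
      congr 1
      ring
    have htpow : t ^ s = t * t ^ (s - 1) := by
      nth_rewrite 1 [show s = 1 + (s - 1) by ring]
      rw [Real.rpow_add ht, Real.rpow_one]
    have hsα : α⁻¹ = s / 2 := by rw [hs]; ring
    rw [e1, MeasureTheory.integral_const_mul, e2, show (1:ℝ) + s = s + 1 by ring,
      Real.Gamma_add_one hs0.ne', htpow, hsα]
    ring
  refine ⟨?_, key2⟩
  rw [← key2]
  refine setIntegral_congr_fun measurableSet_Ioi (fun u hu => ?_)
  have hu0 : (0:ℝ) < u := mem_Ioi.mp hu
  have huα : (0:ℝ) < u ^ α := Real.rpow_pos_of_pos hu0 α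
  rw [Real.rpow_neg hu0.le]
  have hden : (0:ℝ) < u ^ α + t := by positivity
  field_simp
  ring
end

section
/- The function P(c) = ∑_{m=1}^{N_f} q_m ( c_m + (1 − c_m)(1 − e^{−λ c_m}) / 𝒵 ) is concave in c = (c_1,…,c_{N_f}) ∈ [0,1]^{N_f}, for any λ > 0, 𝒵 ≥ 1, and nonnegative weights q_m. -/
open Real

lemma one_dim_concave (lam Z : ℝ) (hlam : 0 < lam) (hZ : 1 ≤ Z) :
    ConcaveOn ℝ (Set.Icc (0 : ℝ) 1)
      (fun x => x + (1 - x) * (1 - Real.exp (-(lam * x))) / Z) := by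
  have hZ0 : (0:ℝ) < Z := lt_of_lt_of_le one_pos hZ
  set E : ℝ → ℝ := fun x => Real.exp (-(lam * x)) with hE
  have hEd : ∀ x : ℝ, HasDerivAt E (-lam * E x) x := by
    intro x
    have h1 : HasDerivAt (fun x : ℝ => -(lam * x)) (-lam) x := by
      simpa using ((hasDerivAt_id x).const_mul lam).fun_neg
    simpa [hE, mul_comm] using h1.exp
  have hf' : ∀ x : ℝ, HasDerivAt (fun x => x + (1 - x) * (1 - E x) / Z)
      (1 + ((-1) * (1 - E x) + (1 - x) * (lam * E x)) / Z) x := by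
    intro x
    have h1 : HasDerivAt (fun x : ℝ => 1 - x) (-1) x := by
      simpa using (hasDerivAt_id x).const_sub 1
    have h2 : HasDerivAt (fun x : ℝ => 1 - E x) (lam * E x) x := by
      simpa [neg_mul] using (hEd x).const_sub 1
    exact (hasDerivAt_id x).add ((h1.mul h2).div_const Z)
  have hf'' : ∀ x : ℝ, HasDerivAt
      (fun x => 1 + ((-1) * (1 - E x) + (1 - x) * (lam * E x)) / Z)
      ((-(lam * E x) + ((-1) * (lam * E x) + (1 - x) * (lam * (-lam * E x)))) / Z) x := by
    intro x
    have h1 : HasDerivAt (fun x : ℝ => 1 - x) (-1) x := by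
      simpa using (hasDerivAt_id x).const_sub 1
    have h2 : HasDerivAt (fun x : ℝ => 1 - E x) (lam * E x) x := by
      simpa [neg_mul] using (hEd x).const_sub 1
    have h3 : HasDerivAt (fun x : ℝ => (-1) * (1 - E x)) (-(lam * E x)) x := by
      simpa using h2.const_mul (-1 : ℝ)
    have h4 : HasDerivAt (fun x : ℝ => lam * E x) (lam * (-lam * E x)) x :=
      (hEd x).const_mul lam
    have h5 : HasDerivAt (fun x : ℝ => (1 - x) * (lam * E x))
        ((-1) * (lam * E x) + (1 - x) * (lam * (-lam * E x))) x := h1.mul h4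
    exact ((h3.add h5).div_const Z).const_add 1
  apply concaveOn_of_hasDerivWithinAt2_nonpos (f' := fun x =>
      1 + ((-1) * (1 - E x) + (1 - x) * (lam * E x)) / Z)
    (f'' := fun x => (-(lam * E x) + ((-1) * (lam * E x) + (1 - x) * (lam * (-lam * E x)))) / Z)
    (convex_Icc 0 1)
  · exact fun x hx => ((hf' x).continuousAt).continuousWithinAt
  · exact fun x hx => (hf' x).hasDerivWithinAt
  · exact fun x hx => (hf'' x).hasDerivWithinAt
  · intro x hx
    rw [interior_Icc] at hx
    have hEpos : 0 < E x := Real.exp_pos _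
    have h1x : 0 < 1 - x := by linarith [hx.2]
    apply div_nonpos_of_nonpos_of_nonneg _ hZ0.le
    nlinarith [mul_pos hlam hEpos, mul_pos (mul_pos hlam hEpos) h1x]

/-- The lower bound on the offloading gain with one content provider,
`P(c) = ∑_m q_m (c_m + (1 − c_m)(1 − e^{−λ c_m})/𝒵)`, is concave in
`c ∈ [0,1]^{N_f}` for any `λ > 0`, `𝒵 ≥ 1` and nonnegative weights `q_m`. -/
theorem offloading_gain_lower_bound_concave
    (Nf : ℕ) (q : Fin Nf → ℝ) (hq : ∀ m, 0 ≤ q m)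
    (lam Z : ℝ) (hlam : 0 < lam) (hZ : 1 ≤ Z) :
    ConcaveOn ℝ (Set.Icc (0 : Fin Nf → ℝ) 1)
      (fun c => ∑ m, q m *
        (c m + (1 - c m) * (1 - Real.exp (-(lam * c m))) / Z)) := by
  have hg := one_dim_concave lam Z hlam hZ
  refine ⟨convex_Icc _ _, ?_⟩
  intro c hc d hd a b ha hb hab
  rw [smul_eq_mul, smul_eq_mul, Finset.mul_sum, Finset.mul_sum, ← Finset.sum_add_distrib]
  refine Finset.sum_le_sum fun m _ => ?_
  have hcm : c m ∈ Set.Icc (0:ℝ) 1 := ⟨hc.1 m, hc.2 m⟩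
  have hdm : d m ∈ Set.Icc (0:ℝ) 1 := ⟨hd.1 m, hd.2 m⟩
  have key := hg.2 hcm hdm ha hb hab
  simp only [smul_eq_mul] at key
  have : (a • c + b • d) m = a * c m + b * d m := rfl
  rw [this]
  calc a * (q m * (c m + (1 - c m) * (1 - Real.exp (-(lam * c m))) / Z))
      + b * (q m * (d m + (1 - d m) * (1 - Real.exp (-(lam * d m))) / Z))
      = q m * (a * (c m + (1 - c m) * (1 - Real.exp (-(lam * c m))) / Z)
          + b * (d m + (1 - d m) * (1 - Real.exp (-(lam * d m))) / Z)) := by ring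
    _ ≤ _ := mul_le_mul_of_nonneg_left key (hq m)
end
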